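/- Define v(x,y) = 1/(2(y+1)²) + 1/(2(y+1)³) + 1/(4(y+1)⁴) + (y−1)/(2(x+y)²) − (y+2)/(2(x+y+1)²). For every fixed y > 0, the function x ↦ v(x,y) is strictly increasing on (0,∞). -/

import Mathlib

noncomputable def v (x y : ℝ) : ℝ :=
  1 / (2 * (y + 1) ^ 2) + 1 / (2 * (y + 1) ^ 3) + 1 / (4 * (y + 1) ^ 4) +
    (y - 1) / (2 * (x + y) ^ 2) - (y + 2) / (2 * (x + y + 1) ^ 2)

lemma v_hasDerivAt (y x : ℝ) (hy : 0 < y) (hx : 0 < x) :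
    HasDerivAt (fun x => v x y)
      ((0 * (2 * (x + y) ^ 2) - (y - 1) * (2 * (2 * (x + y) * 1))) / (2 * (x + y) ^ 2) ^ 2 -
        (0 * (2 * (x + y + 1) ^ 2) - (y + 2) * (2 * (2 * (x + y + 1) * 1))) /
          (2 * (x + y + 1) ^ 2) ^ 2) x := by
  have hxy : (x + y) ≠ 0 := by positivity
  have hxy1 : (x + y + 1) ≠ 0 := by positivity
  have H1 : HasDerivAt (fun x : ℝ => x + y) 1 x := (hasDerivAt_id x).add_const y
  have H2 : HasDerivAt (fun x : ℝ => x + y + 1) 1 x := H1.add_const 1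
  have H1' : HasDerivAt (fun x : ℝ => (x + y) ^ 2) (2 * (x + y) * 1) x := by
    simpa using H1.fun_pow 2
  have H2' : HasDerivAt (fun x : ℝ => (x + y + 1) ^ 2) (2 * (x + y + 1) * 1) x := by
    simpa using H2.fun_pow 2
  have HA : HasDerivAt (fun x : ℝ => (y - 1) / (2 * (x + y) ^ 2))
      ((0 * (2 * (x + y) ^ 2) - (y - 1) * (2 * (2 * (x + y) * 1))) / (2 * (x + y) ^ 2) ^ 2) x :=
    (hasDerivAt_const x (y - 1)).div (H1'.const_mul 2) (by positivity)
  have HB : HasDerivAt (fun x : ℝ => (y + 2) / (2 * (x + y + 1) ^ 2))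
      ((0 * (2 * (x + y + 1) ^ 2) - (y + 2) * (2 * (2 * (x + y + 1) * 1))) /
        (2 * (x + y + 1) ^ 2) ^ 2) x :=
    (hasDerivAt_const x (y + 2)).div (H2'.const_mul 2) (by positivity)
  have := ((((hasDerivAt_const x (1 / (2 * (y + 1) ^ 2))).add
      (hasDerivAt_const x (1 / (2 * (y + 1) ^ 3)))).fun_add
      (hasDerivAt_const x (1 / (4 * (y + 1) ^ 4)))).fun_add HA).fun_sub HB
  simpa [v] using this

theorem stmt_8 (y : ℝ) (hy : 0 < y) :
    StrictMonoOn (fun x => v x y) (Set.Ioi 0) := by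
  have key : ∀ x ∈ interior (Set.Ioi (0:ℝ)), 0 < deriv (fun x => v x y) x := by
    intro x hx
    rw [interior_Ioi] at hx
    have hx : (0:ℝ) < x := hx
    have hD := v_hasDerivAt y x hy hx
    rw [hD.deriv]
    have h1 : (0:ℝ) < x + y := by linarith
    have h2 : (0:ℝ) < x + y + 1 := by linarith
    rw [div_sub_div _ _ (by positivity) (by positivity), div_pos_iff]
    left
    constructor
    · ring_nf
      nlinarith [pow_pos h1 2, pow_pos h2 2, pow_pos h1 3, pow_pos h2 3,
        mul_pos (pow_pos h1 2) (pow_pos h2 2), sq_nonneg (x + y), sq_nonneg x,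
        mul_pos hx (pow_pos h1 2), mul_pos hy (pow_pos h2 2)]
    · positivity
  exact StrictMonoOn.mono
    (strictMonoOn_of_deriv_pos (convex_Ioi 0)
      (by
        apply ContinuousOn.mono ?_ (subset_refl _)
        have : ∀ x ∈ Set.Ioi (0:ℝ), HasDerivAt (fun x => v x y) _ x := fun x hx =>
          v_hasDerivAt y x hy hx
        exact fun x hx => ((v_hasDerivAt y x hy hx).continuousAt).continuousWithinAt)
      key) (by simp)
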